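/- Let N=(V,E,s,t) be a unit-capacity point-to-point network, F a k-CF of N, and 1 ≤ m ≤ k−1. Then there exists F' ⊆ F such that F' is an m-CF of N and F \ F' is a (k−m)-CF of the network N\F'. -/

import Mathlib

/-- A point-to-point network: a finite directed multigraph with edge set
`edges`, endpoint maps `tail`/`head`, source `s` and sink `t`; every edge has
unit capacity. -/
structure Network (V : Type) (ε : Type) where
  edges : Finset ε
  tail : ε → V
  head : ε → V
  s : V
  t : V

namespace Network

variable {V ε : Type} [DecidableEq ε]

/-- `p` is a nonempty directed walk from `u` to `v` using edges of `N`. -/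
def IsWalk (N : Network V ε) (u v : V) (p : List ε) : Prop :=
  p ≠ [] ∧ (∀ e ∈ p, e ∈ N.edges) ∧
  (∀ i, ∀ h : i + 1 < p.length,
    N.head (p.get ⟨i, Nat.lt_of_succ_lt h⟩) = N.tail (p.get ⟨i + 1, h⟩)) ∧
  (∀ h : 0 < p.length, N.tail (p.get ⟨0, h⟩) = u) ∧
  (∀ h : 0 < p.length, N.head (p.get ⟨p.length - 1, Nat.sub_lt h Nat.one_pos⟩) = v)

/-- An `s`-`t` path: an edge-simple walk from the source to the sink. -/
def IsPath (N : Network V ε) (p : List ε) : Prop :=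
  N.IsWalk N.s N.t p ∧ p.Nodup

/-- `v` is reachable from `u` by a directed walk (or `u = v`). -/
def Reach (N : Network V ε) (u v : V) : Prop :=
  u = v ∨ ∃ p, N.IsWalk u v p

/-- Reachability within the subgraph induced by the vertex set `S`. -/
def ReachIn (N : Network V ε) (S : Set V) (u v : V) : Prop :=
  u = v ∨ ∃ p, N.IsWalk u v p ∧ ∀ e ∈ p, N.tail e ∈ S ∧ N.head e ∈ S

/-- An edge-simple directed cycle. -/
def IsCycle (N : Network V ε) (p : List ε) : Prop :=
  ∃ u, N.IsWalk u u p ∧ p.Nodup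

def Acyclic (N : Network V ε) : Prop := ∀ p, ¬ N.IsCycle p

/-- A collection of pairwise edge-disjoint `s`-`t` paths (an integral flow in a
unit-capacity network). -/
def IsFlowList (N : Network V ε) (fs : List (List ε)) : Prop :=
  (∀ p ∈ fs, N.IsPath p) ∧ fs.Pairwise fun p q => ∀ e ∈ p, e ∉ q

def HasFlow (N : Network V ε) (n : ℕ) : Prop :=
  ∃ fs, N.IsFlowList fs ∧ fs.length = n

/-- The maximum-flow value `C_N(s,t)`: the maximum number of pairwise
edge-disjoint directed `s`-`t` paths. -/
noncomputable def maxFlow (N : Network V ε) : ℕ :=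
  sSup {n | N.HasFlow n}

/-- Delete the edges of `F` from the network. -/
def del (N : Network V ε) (F : Finset ε) : Network V ε :=
  { N with edges := N.edges \ F }

/-- `F` is a `k`-th order capacity factor of `N`:
`C_{N\F} ≤ C_N − k`, and `C_{N\F'} > C_N − k` for every proper `F' ⊊ F`. -/
def IsKCF (N : Network V ε) (k : ℕ) (F : Finset ε) : Prop :=
  F.Nonempty ∧ F ⊆ N.edges ∧ (N.del F).maxFlow + k ≤ N.maxFlow ∧
    ∀ F' ⊂ F, N.maxFlow < (N.del F').maxFlow + k

/-- `F` is a capacity factor of `N`: deleting `F` decreases the maximum flow,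
while deleting any proper subset does not. -/
def IsCF (N : Network V ε) (F : Finset ε) : Prop :=
  F.Nonempty ∧ F ⊆ N.edges ∧ (N.del F).maxFlow < N.maxFlow ∧
    ∀ F' ⊂ F, (N.del F').maxFlow = N.maxFlow

/-- The set of edges used by a flow given as a list of paths. -/
def usedEdges (fs : List (List ε)) : Finset ε := fs.flatten.toFinset

/-- Residual network w.r.t. a set of used (unit-capacity) edges: used edges
are reversed, unused edges keep their direction. -/
def residual (N : Network V ε) (used : Finset ε) : Network V ε :=
  { edges := N.edges,
    tail := fun e => if e ∈ used then N.head e else N.tail e,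
    head := fun e => if e ∈ used then N.tail e else N.head e,
    s := N.s, t := N.t }

/-- The same network with sink replaced by `v`. -/
def withSink (N : Network V ε) (v : V) : Network V ε := { N with t := v }

end Network

open Network

namespace Network

variable {V ε : Type} [DecidableEq ε]

lemma del_del (N : Network V ε) (A B : Finset ε) : (N.del A).del B = N.del (A ∪ B) := by
  simp [del, sdiff_sdiff_left]

lemma del_empty (N : Network V ε) : N.del ∅ = N := by
  cases N; simp [del]

lemma aux_length_le_flatten {α : Type*} (fs : List (List α)) (h : ∀ p ∈ fs, p ≠ []) :
    fs.length ≤ fs.flatten.length := by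
  induction fs with
  | nil => simp
  | cons a l ih =>
    simp only [List.flatten_cons, List.length_cons, List.length_append]
    have ha : 0 < a.length := List.length_pos_iff.mpr (h a (by simp))
    have := ih (fun p hp => h p (by simp [hp]))
    omega

lemma flowList_length_le (N : Network V ε) (fs : List (List ε)) (h : N.IsFlowList fs) :
    fs.length ≤ N.edges.card := by
  have hnd : fs.flatten.Nodup := by
    rw [List.nodup_flatten]
    exact ⟨fun l hl => (h.1 l hl).2, h.2.imp (fun {p q} hpq a ha => hpq a ha)⟩
  have h1 : fs.length ≤ fs.flatten.length :=
    aux_length_le_flatten fs (fun p hp => (h.1 p hp).1.1)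
  have h2 : fs.flatten.toFinset ⊆ N.edges := by
    intro x hx
    rw [List.mem_toFinset, List.mem_flatten] at hx
    obtain ⟨p, hp, hxp⟩ := hx
    exact (h.1 p hp).1.2.1 x hxp
  have h3 := Finset.card_le_card h2
  rw [List.toFinset_card_of_nodup hnd] at h3
  omega

lemma bddAbove_hasFlow (N : Network V ε) : BddAbove {n | N.HasFlow n} := by
  refine ⟨N.edges.card, fun n hn => ?_⟩
  obtain ⟨fs, hfs, hlen⟩ := hn
  exact hlen ▸ flowList_length_le N fs hfs

omit [DecidableEq ε] in
lemma hasFlow_zero (N : Network V ε) : N.HasFlow 0 :=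
  ⟨[], ⟨by simp, List.Pairwise.nil⟩, rfl⟩

lemma hasFlow_maxFlow (N : Network V ε) : N.HasFlow N.maxFlow := by
  have h0 : (0 : ℕ) ∈ {n | N.HasFlow n} := hasFlow_zero N
  exact Nat.sSup_mem ⟨0, h0⟩ (bddAbove_hasFlow N)

lemma le_maxFlow {N : Network V ε} {n : ℕ} (h : N.HasFlow n) : n ≤ N.maxFlow :=
  le_csSup (bddAbove_hasFlow N) h

lemma isPath_del {N : Network V ε} {F : Finset ε} {p : List ε}
    (hp : N.IsPath p) (h : ∀ e ∈ F, e ∉ p) : (N.del F).IsPath p := by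
  obtain ⟨⟨h1, h2, h3, h4, h5⟩, h6⟩ := hp
  refine ⟨⟨h1, fun e he => ?_, h3, h4, h5⟩, h6⟩
  simp only [del, Finset.mem_sdiff]
  exact ⟨h2 e he, fun hc => h e hc he⟩

lemma maxFlow_le_del_singleton (N : Network V ε) (e : ε) :
    N.maxFlow ≤ (N.del {e}).maxFlow + 1 := by
  obtain ⟨fs, hfs, hlen⟩ := hasFlow_maxFlow N
  set fs' := fs.filter (fun p => e ∉ p) with hfs'
  have hflow : (N.del {e}).IsFlowList fs' := by
    constructor
    · intro p hp
      rw [hfs', List.mem_filter] at hp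
      refine isPath_del (hfs.1 p hp.1) ?_
      intro x hx
      rw [Finset.mem_singleton] at hx
      subst hx
      simpa using hp.2
    · exact hfs.2.sublist List.filter_sublist
  have hone : (fs.filter (fun p => e ∈ p)).length ≤ 1 := by
    rcases hm : fs.filter (fun p => e ∈ p) with _ | ⟨a, _ | ⟨b, l⟩⟩
    · simp [hm]
    · simp [hm]
    · rw [hm]; exfalso
      have hpw := (hfs.2.filter (fun p => decide (e ∈ p)))
      rw [hm] at hpw
      have ha : e ∈ a := by
        have hamem : a ∈ fs.filter (fun p => e ∈ p) := by rw [hm]; simp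
        have := List.mem_filter.mp hamem
        simpa using this.2
      have hb : e ∈ b := by
        have hbmem : b ∈ fs.filter (fun p => e ∈ p) := by rw [hm]; simp
        have := List.mem_filter.mp hbmem
        simpa using this.2
      exact (List.pairwise_cons.mp hpw).1 b (by simp) e ha hb
  have hsplit := fs.length_eq_length_filter_add (fun p => decide (e ∉ p))
  have hsame : fs.filter (fun p => !decide (e ∉ p)) = fs.filter (fun p => e ∈ p) := by
    apply List.filter_congr
    intro x _
    simp
  rw [hsame] at hsplit
  have hle := le_maxFlow ⟨fs', hflow, rfl⟩
  have hfse : fs'.length = (fs.filter (fun p => decide (e ∉ p))).length := rfl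
  omega

lemma maxFlow_del_le_del_erase (N : Network V ε) (F : Finset ε) {e : ε} (he : e ∈ F) :
    (N.del (F \ {e})).maxFlow ≤ (N.del F).maxFlow + 1 := by
  have h1 : (N.del (F \ {e})).del {e} = N.del F := by
    rw [del_del, Finset.sdiff_union_of_subset (Finset.singleton_subset_iff.mpr he)]
  have := maxFlow_le_del_singleton (N.del (F \ {e})) e
  rw [h1] at this
  exact this

end Network

/-- Any `k`-CF splits into an `m`-CF of `N` and a `(k−m)`-CF of the network
with the former deleted. -/
theorem kCF_decompose {V ε : Type} [DecidableEq ε]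
    (N : Network V ε) (k m : ℕ) (F : Finset ε)
    (hF : N.IsKCF k F) (hm1 : 1 ≤ m) (hm2 : m ≤ k - 1) :
    ∃ F' ⊆ F, N.IsKCF m F' ∧ (N.del F').IsKCF (k - m) (F \ F') := by
  classical
  obtain ⟨hFne, hFsub, hFk, hFmin⟩ := hF
  have hmk : m < k := by omega
  obtain ⟨e, he⟩ := hFne
  -- the property we minimize over
  set P : Finset ε → Prop := fun A => (N.del A).maxFlow + m ≤ N.maxFlow with hP
  have hPFe : P (F \ {e}) := by
    have h1 := maxFlow_del_le_del_erase N F he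
    simp only [hP]
    omega
  -- choose a card-minimal subset of F \ {e} satisfying P
  set S : Finset (Finset ε) := (F \ {e}).powerset.filter P with hS
  have hSne : S.Nonempty := ⟨F \ {e}, by simp [hS, hPFe]⟩
  obtain ⟨F', hF'S, hF'min⟩ := S.exists_min_image Finset.card hSne
  have hF'mem := Finset.mem_filter.mp hF'S
  have hF'sub : F' ⊆ F \ {e} := Finset.mem_powerset.mp hF'mem.1
  have hF'P : P F' := hF'mem.2
  have hF'F : F' ⊆ F := hF'sub.trans (Finset.sdiff_subset)
  -- minimality: no proper subset of F' satisfies P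
  have hminP : ∀ B ⊂ F', ¬ P B := by
    intro B hB hPB
    have hBS : B ∈ S := Finset.mem_filter.mpr
      ⟨Finset.mem_powerset.mpr (hB.subset.trans hF'sub), hPB⟩
    exact absurd (hF'min B hBS) (by simpa using Finset.card_lt_card hB)
  -- F' is nonempty
  have hF'ne : F'.Nonempty := by
    rcases Finset.eq_empty_or_nonempty F' with h | h
    · exfalso
      rw [h] at hF'P
      simp only [hP, del_empty] at hF'P
      omega
    · exact h
  -- (N.del F').maxFlow = N.maxFlow - m  (exactly)
  obtain ⟨e', he'⟩ := hF'ne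
  have hkey : (N.del F').maxFlow + m = N.maxFlow := by
    have h1 := maxFlow_del_le_del_erase N F' he'
    have h2 : ¬ P (F' \ {e'}) := hminP _ (Finset.sdiff_ssubset (by simpa using he') (by simp))
    simp only [hP, not_le] at h2 hF'P
    omega
  have hek : (N.del F).maxFlow + k ≤ N.maxFlow := hFk
  refine ⟨F', hF'F, ⟨⟨e', he'⟩, hF'F.trans hFsub, hF'P, ?_⟩, ?_⟩
  · intro F'' hF''
    have := hminP F'' hF''
    simp only [hP, not_le] at this
    exact this
  · -- (N.del F').IsKCF (k - m) (F \ F')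
    have heFF' : e ∈ F \ F' := Finset.mem_sdiff.mpr
      ⟨he, fun hc => by simpa using Finset.mem_sdiff.mp (hF'sub hc)⟩
    refine ⟨⟨e, heFF'⟩, ?_, ?_, ?_⟩
    · intro x hx
      obtain ⟨hx1, hx2⟩ := Finset.mem_sdiff.mp hx
      exact Finset.mem_sdiff.mpr ⟨hFsub hx1, hx2⟩
    · have hdd : (N.del F').del (F \ F') = N.del F := by
        rw [del_del, Finset.union_sdiff_of_subset hF'F]
      rw [hdd]
      omega
    · intro G'' hG''
      have hH : F' ∪ G'' ⊂ F := by
        obtain ⟨x, hxG, hxG''⟩ := Finset.exists_of_ssubset hG''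
        obtain ⟨hx1, hx2⟩ := Finset.mem_sdiff.mp hxG
        constructor
        · exact Finset.union_subset hF'F (hG''.subset.trans Finset.sdiff_subset)
        · intro hc
          exact absurd (hc hx1) (by simp [hx2, hxG''])
      have hdd : (N.del F').del G'' = N.del (F' ∪ G'') := del_del N F' G''
      have := hFmin (F' ∪ G'') hH
      rw [hdd]
      omega
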